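/- If a self-modified ascent sequence a corresponds under the bijection f_AM to the d×d upper-triangular Fishburn matrix M = (m_{ij}), then a equals the concatenation (0^{m_{11}}, 1^{m_{22}}, 0^{m_{12}}, 2^{m_{33}}, 1^{m_{23}}, 0^{m_{13}}, ..., (d-1)^{m_{dd}}, (d-2)^{m_{d-1,d}}, ..., 0^{m_{1d}}), where i^j denotes j copies of i, and the dual ascent sequence a* (corresponding to the reflection of M through its antidiagonal) equals (0^{m_{dd}}, 1^{m_{d-1,d-1}}, 0^{m_{d-1,d}}, ..., (d-1)^{m_{11}}, (d-2)^{m_{12}}, ..., 0^{m_{1d}}). -/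

import Mathlib

def ascents (l : List ℕ) : ℕ :=
  ((l.zip l.tail).filter (fun p => p.1 < p.2)).length

def IsAscSeq (l : List ℕ) : Prop :=
  l.getD 0 0 = 0 ∧
  ∀ k, k < l.length → 0 < k → l.getD k 0 ≤ ascents (l.take k) + 1

def IsRGF (l : List ℕ) : Prop :=
  l.getD 0 0 = 0 ∧
  ∀ k, k < l.length → ∀ j, l.getD k 0 = j + 1 → ∃ i, i < k ∧ l.getD i 0 = j

def SelfModified (l : List ℕ) : Prop :=
  IsAscSeq l ∧
  ∀ k, k < l.length → 0 < k →
    l.getD k 0 ≤ l.getD (k - 1) 0 ∨ l.getD k 0 = ascents (l.take k) + 1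

def Contains101 (l : List ℕ) : Prop :=
  ∃ i j k, i < j ∧ j < k ∧ k < l.length ∧
    l.getD i 0 = l.getD k 0 ∧ l.getD j 0 < l.getD k 0

def Contains0101 (l : List ℕ) : Prop :=
  ∃ i j k m, i < j ∧ j < k ∧ k < m ∧ m < l.length ∧
    l.getD i 0 = l.getD k 0 ∧ l.getD j 0 = l.getD m 0 ∧ l.getD i 0 < l.getD j 0

def Contains1010 (l : List ℕ) : Prop :=
  ∃ i j k m, i < j ∧ j < k ∧ k < m ∧ m < l.length ∧
    l.getD i 0 = l.getD k 0 ∧ l.getD j 0 = l.getD m 0 ∧ l.getD j 0 < l.getD i 0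

/-- The view of position `i` in the sequence `a`: the number of indices `j > i` such
that `a j` strictly exceeds all entries `a k` for `i ≤ k < j`.  This agrees with the
recursive definition `v i = v j + 1` for `j` the least index `> i` with `a j > a i`. -/
def view {α : Type*} [LinearOrder α] [Inhabited α] (a : List α) (i : ℕ) : ℕ :=
  ((List.range a.length).filter (fun j =>
    decide (i < j ∧ ∀ k, k < j → i ≤ k → a.getD k default < a.getD j default))).length

/-- The panorama of `a`: the views of the positions of `a`, listed grouped by entry
value from largest value to smallest, positions within a group in increasing order. -/
def pan {α : Type*} [LinearOrder α] [Inhabited α] (a : List α) : List ℕ :=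
  ((List.range a.length).mergeSort (fun i j =>
    decide (a.getD j default < a.getD i default ∨
      (a.getD i default = a.getD j default ∧ i ≤ j)))).map (view a)

/-- A square matrix of natural numbers, given by a dimension and an entry function
(indices are 0-based; entries with an index `≥ d` are irrelevant/zero). -/
structure FMat where
  d : ℕ
  entry : ℕ → ℕ → ℕ

/-- 0-based index of the first row whose rightmost entry is nonzero. -/
noncomputable def mindex (M : FMat) : ℕ :=
  sInf {i | M.entry i (M.d - 1) ≠ 0}

/-- One step of the recursive bijection from ascent sequences to Fishburn matrices,
with cases AM1, AM2, AM3 (0-based indices). -/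
noncomputable def fStep (M : FMat) (a : ℕ) : FMat :=
  if a ≤ mindex M then
    -- AM1: increase entry (a, d-1)
    ⟨M.d, fun i j => M.entry i j + if i = a ∧ j = M.d - 1 then 1 else 0⟩
  else if a = M.d then
    -- AM2: append a new row and column, with 1 in the new diagonal entry
    ⟨M.d + 1, fun i j =>
      if i = M.d ∨ j = M.d then (if i = M.d ∧ j = M.d then 1 else 0)
      else M.entry i j⟩
  else
    -- AM3: insert a new row and column at index a
    ⟨M.d + 1, fun i j =>
      if i = a then (if j = M.d then 1 else 0)
      else if j = a then (if i < a then M.entry i (M.d - 1) else 0)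
      else if j = M.d ∧ i < a then 0
      else M.entry (if i < a then i else i - 1) (if j < a then j else j - 1)⟩

/-- The map from ascent sequences to Fishburn matrices. -/
noncomputable def fAM (l : List ℕ) : FMat :=
  l.tail.foldl fStep ⟨1, fun i j => if i = 0 ∧ j = 0 then 1 else 0⟩

/-- Fishburn matrix: upper triangular (and supported on `[0,d) × [0,d)`),
with no zero row and no zero column. -/
def IsFishburn (M : FMat) : Prop :=
  (∀ i j, (M.d ≤ i ∨ M.d ≤ j ∨ j < i) → M.entry i j = 0) ∧
  (∀ i, i < M.d → ∃ j, j < M.d ∧ M.entry i j ≠ 0) ∧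
  (∀ j, j < M.d → ∃ i, i < M.d ∧ M.entry i j ≠ 0)

def entrySum (M : FMat) : ℕ :=
  ∑ i ∈ Finset.range M.d, ∑ j ∈ Finset.range M.d, M.entry i j

/-- Reflection of a matrix through its antidiagonal. -/
def reflect (M : FMat) : FMat :=
  ⟨M.d, fun i j => if i < M.d ∧ j < M.d then M.entry (M.d - 1 - j) (M.d - 1 - i) else 0⟩

/-- The canonical sequence `(0^{m₀₀}, 1^{m₁₁}, 0^{m₀₁}, 2^{m₂₂}, 1^{m₁₂}, 0^{m₀₂}, …)`
(0-based indices) associated to a matrix; this is `f_MA(M)` for `M ∈ RMatrices`. -/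
def canonSeq (M : FMat) : List ℕ :=
  (List.range M.d).flatMap (fun j =>
    (List.range (j + 1)).reverse.flatMap (fun i => List.replicate (M.entry i j) i))

/-- The dual canonical sequence
`(0^{m_{d-1,d-1}}, 1^{m_{d-2,d-2}}, 0^{m_{d-2,d-1}}, …, (d-1)^{m_{0,0}}, …, 0^{m_{0,d-1}})`,
i.e. `f_MA` applied to the antidiagonal reflection of `M`. -/
def dualCanonSeq (M : FMat) : List ℕ :=
  (List.range M.d).flatMap (fun j =>
    (List.range (j + 1)).reverse.flatMap (fun i =>
      List.replicate (M.entry (M.d - 1 - j) (M.d - 1 - i)) i))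

/-- A matrix is SE-free if it has no pair of nonzero entries `m i j`, `m i' j'`
with `i < i'`, `j < j'` and `i' ≤ j`. -/
def SEFree (M : FMat) : Prop :=
  ¬ ∃ i j i' j', i < i' ∧ j < j' ∧ i' ≤ j ∧ j' < M.d ∧
    M.entry i j ≠ 0 ∧ M.entry i' j' ≠ 0

/-- Generalized ballot sequence (Yamanouchi word): in every prefix, each value `j+1`
occurs at most as often as `j`. -/
def IsBallot (l : List ℕ) : Prop :=
  ∀ k j, (l.take k).count (j + 1) ≤ (l.take k).count j


/-! ### Auxiliary machinery -/

section SMAux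

theorem fmat_ext {M N : FMat} (h1 : M.d = N.d) (h2 : M.entry = N.entry) : M = N := by
  cases M; cases N; cases h1; cases h2; rfl

/-- `canonSeq` in terms of the components. -/
def cs (d : ℕ) (e : ℕ → ℕ → ℕ) : List ℕ :=
  (List.range d).flatMap (fun j =>
    (List.range (j + 1)).reverse.flatMap (fun i => List.replicate (e i j) i))

lemma canonSeq_mk (d : ℕ) (e : ℕ → ℕ → ℕ) : canonSeq ⟨d, e⟩ = cs d e := rfl

lemma flatMap_congr' {α : Type*} {l : List ℕ} {f g : ℕ → List α}
    (h : ∀ x ∈ l, f x = g x) : l.flatMap f = l.flatMap g := by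
  simp only [List.flatMap]; rw [List.map_congr_left h]

lemma flatMap_eq_nil' {α : Type*} {l : List ℕ} {f : ℕ → List α}
    (h : ∀ x ∈ l, f x = []) : l.flatMap f = [] := by
  rw [flatMap_congr' h]; simp

lemma ascents_singleton (x : ℕ) : ascents [x] = 0 := by simp [ascents]

lemma ascents_cons_cons (a b : ℕ) (l : List ℕ) :
    ascents (a :: b :: l) = (if a < b then 1 else 0) + ascents (b :: l) := by
  simp only [ascents, List.tail_cons, List.zip_cons_cons, List.filter_cons]
  split <;> simp_all <;> omega

lemma ascents_concat : ∀ (l : List ℕ) (y x : ℕ), l.getLast? = some y →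
    ascents (l ++ [x]) = ascents l + if y < x then 1 else 0 := by
  intro l
  induction l with
  | nil => intro y x h; simp at h
  | cons a t ih =>
    intro y x h
    cases t with
    | nil =>
      simp at h
      subst h
      simp [ascents_singleton, List.nil_append, ascents_cons_cons]
    | cons b s =>
      have h' : (b :: s).getLast? = some y := by
        rwa [List.getLast?_cons_cons] at h
      have h1 : (a :: b :: s) ++ [x] = a :: b :: (s ++ [x]) := by simp
      rw [h1, ascents_cons_cons]
      have h2 : (b :: s) ++ [x] = b :: (s ++ [x]) := by simp
      rw [← h2, ih y x h', ascents_cons_cons]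
      omega

lemma cs_ne_nil (k : ℕ) (e : ℕ → ℕ → ℕ) (h : 0 < e k k) : cs (k + 1) e ≠ [] := by
  apply List.ne_nil_of_mem (a := k)
  unfold cs
  refine List.mem_flatMap.mpr ⟨k, by simp, ?_⟩
  refine List.mem_flatMap.mpr ⟨k, by simp, ?_⟩
  exact List.mem_replicate.mpr ⟨by omega, rfl⟩

lemma blockF (f g : ℕ → ℕ) (x : ℕ) (h0 : ∀ i, i < x → f i = 0)
    (hne : ∀ i, i ≠ x → g i = f i) (hx : g x = f x + 1) :
    ∀ n, x < n →
      (List.range n).reverse.flatMap (fun i => List.replicate (g i) i) =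
      (List.range n).reverse.flatMap (fun i => List.replicate (f i) i) ++ [x] := by
  intro n
  induction n with
  | zero => omega
  | succ n ih =>
    intro hxn
    have hrev : (List.range (n + 1)).reverse = n :: (List.range n).reverse := by
      simp [List.range_succ]
    rw [hrev, List.flatMap_cons, List.flatMap_cons]
    rcases eq_or_lt_of_le (Nat.lt_succ_iff.mp hxn) with he | hlt
    · subst he
      have hz : ∀ h' : ℕ → ℕ, (∀ i, i < x → h' i = 0) →
          (List.range x).reverse.flatMap (fun i => List.replicate (h' i) i) = [] := by
        intro h' hh
        apply flatMap_eq_nil'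
        intro i hi
        simp only [List.mem_reverse, List.mem_range] at hi
        rw [hh i hi]; rfl
      rw [hz f h0, hz g (fun i hi => (hne i (Nat.ne_of_lt hi)).trans (h0 i hi)), hx,
        List.replicate_succ']
      simp
    · rw [hne n (by omega), ih hlt]
      simp

lemma csF (k : ℕ) (e : ℕ → ℕ → ℕ) (x : ℕ) (hx : x ≤ k) (h0 : ∀ i, i < x → e i k = 0) :
    cs (k + 1) (fun i j => e i j + if i = x ∧ j = k then 1 else 0) =
      cs (k + 1) e ++ [x] := by
  unfold cs
  rw [List.range_succ, List.flatMap_append, List.flatMap_append]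
  have h1 : (List.range k).flatMap (fun j => (List.range (j + 1)).reverse.flatMap
        fun i => List.replicate (e i j + if i = x ∧ j = k then 1 else 0) i) =
      (List.range k).flatMap (fun j => (List.range (j + 1)).reverse.flatMap
        fun i => List.replicate (e i j) i) := by
    apply flatMap_congr'
    intro j hj
    apply flatMap_congr'
    intro i _
    have : j ≠ k := by simp only [List.mem_range] at hj; omega
    simp [this]
  rw [h1]
  have h2 : [k].flatMap (fun j => (List.range (j + 1)).reverse.flatMap
        fun i => List.replicate (e i j + if i = x ∧ j = k then 1 else 0) i) =
      [k].flatMap (fun j => (List.range (j + 1)).reverse.flatMap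
        fun i => List.replicate (e i j) i) ++ [x] := by
    simp only [List.flatMap_cons, List.flatMap_nil, List.append_nil]
    have hb := blockF (fun i => e i k) (fun i => e i k + if i = x then 1 else 0) x h0
      (by intro i hi; simp [hi]) (by simp) (k + 1) (by omega)
    simpa using hb
  rw [h2, List.append_assoc]

lemma csE (K : ℕ) (f : ℕ → ℕ → ℕ) :
    cs (K + 1) (fun i j => if i = K ∨ j = K then (if i = K ∧ j = K then 1 else 0)
      else f i j) = cs K f ++ [K] := by
  unfold cs
  rw [List.range_succ, List.flatMap_append]
  have h1 : (List.range K).flatMap (fun j => (List.range (j + 1)).reverse.flatMap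
        fun i => List.replicate (if i = K ∨ j = K then (if i = K ∧ j = K then 1 else 0)
          else f i j) i) =
      (List.range K).flatMap (fun j => (List.range (j + 1)).reverse.flatMap
        fun i => List.replicate (f i j) i) := by
    apply flatMap_congr'
    intro j hj
    apply flatMap_congr'
    intro i hi
    simp only [List.mem_range] at hj
    simp only [List.mem_reverse, List.mem_range] at hi
    have hik : i ≠ K := by omega
    have hjk : j ≠ K := by omega
    simp [hik, hjk]
  rw [h1]
  have h2 : [K].flatMap (fun j => (List.range (j + 1)).reverse.flatMap
        fun i => List.replicate (if i = K ∨ j = K then (if i = K ∧ j = K then 1 else 0)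
          else f i j) i) = [K] := by
    simp only [List.flatMap_cons, List.flatMap_nil, List.append_nil]
    rw [show (List.range (K + 1)).reverse = K :: (List.range K).reverse from by
      simp [List.range_succ]]
    rw [List.flatMap_cons]
    rw [flatMap_eq_nil' (by
      intro i hi
      simp only [List.mem_reverse, List.mem_range] at hi
      have : i ≠ K := by omega
      simp [this])]
    simp
  rw [h2]

lemma fAM_concat (b : List ℕ) (x : ℕ) (hb : b ≠ []) :
    fAM (b ++ [x]) = fStep (fAM b) x := by
  obtain ⟨c, t, rfl⟩ := List.exists_cons_of_ne_nil hb
  simp [fAM, List.cons_append, List.foldl_append]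

/-- Main lemma A: `fAM` inverts the canonical sequence construction. -/
lemma lemA : ∀ (n : ℕ) (k : ℕ) (e : ℕ → ℕ → ℕ),
    (∀ i j, (k + 1 ≤ i ∨ k + 1 ≤ j ∨ j < i) → e i j = 0) →
    (∀ i, i ≤ k → 0 < e i i) →
    (cs (k + 1) e).length ≤ n →
    fAM (cs (k + 1) e) = ⟨k + 1, e⟩ := by
  intro n
  induction n with
  | zero =>
    intro k e hs hd hl
    exact absurd (List.length_eq_zero_iff.mp (Nat.le_zero.mp hl)) (cs_ne_nil k e (hd k le_rfl))
  | succ n ih =>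
    intro k e hs hd hl
    have hkS : k ∈ {i | e i k ≠ 0} := (hd k le_rfl).ne'
    have hLmem : e (sInf {i | e i k ≠ 0}) k ≠ 0 := Nat.sInf_mem ⟨k, hkS⟩
    set L := sInf {i | e i k ≠ 0} with hLdef
    have hLk : L ≤ k := Nat.sInf_le hkS
    have hlow : ∀ i, i < L → e i k = 0 := by
      intro i hi
      by_contra hne
      exact Nat.notMem_of_lt_sInf hi hne
    by_cases hc : L = k ∧ e L k = 1
    · obtain ⟨hLe, hm⟩ := hc
      cases k with
      | zero =>
        have hL0 : L = 0 := by omega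
        rw [hL0] at hm
        have hcs1 : cs 1 e = [0] := by
          unfold cs
          simp [List.range_succ, hm]
        rw [hcs1]
        have hfa : fAM [0] = ⟨1, fun i j => if i = 0 ∧ j = 0 then 1 else 0⟩ := rfl
        rw [hfa]
        refine fmat_ext rfl ?_
        funext i j
        by_cases h00 : i = 0 ∧ j = 0
        · obtain ⟨rfl, rfl⟩ := h00
          simp [hm]
        · have hz : e i j = 0 := hs i j (by omega)
          simp only [hz]
          rw [if_neg h00]
      | succ k' =>
        set E2 : ℕ → ℕ → ℕ := fun i j => if i = k' + 1 ∨ j = k' + 1 then 0 else e i j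
          with hE2
        have hfun : (fun i j => if i = k' + 1 ∨ j = k' + 1 then
            (if i = k' + 1 ∧ j = k' + 1 then 1 else 0) else E2 i j) = e := by
          funext i j
          by_cases hi : i = k' + 1 <;> by_cases hj : j = k' + 1
          · subst hi; subst hj
            simp only [hE2]
            rw [hLe] at hm
            simp [hm]
          · subst hi
            simp only [hE2, true_or, if_pos]
            have : e (k' + 1) j = 0 := hs (k' + 1) j (by omega)
            simp [hj, this]
          · subst hj
            simp only [hE2, or_true, if_pos]
            have : e i (k' + 1) = 0 := by
              rcases Nat.lt_or_ge i (k' + 1) with h | h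
              · exact hlow i (by omega)
              · exact hs i (k' + 1) (by omega)
            simp [hi, this]
          · simp [hE2, hi, hj]
        have hsupp2 : ∀ i j, (k' + 1 ≤ i ∨ k' + 1 ≤ j ∨ j < i) → E2 i j = 0 := by
          intro i j h
          simp only [hE2]
          by_cases hij : i = k' + 1 ∨ j = k' + 1
          · simp [hij]
          · push_neg at hij
            rw [if_neg (by tauto)]
            exact hs i j (by omega)
        have hdiag2 : ∀ i, i ≤ k' → 0 < E2 i i := by
          intro i hi
          simp only [hE2]
          rw [if_neg (by omega)]
          exact hd i (by omega)
        have hcsE : cs (k' + 1 + 1) e = cs (k' + 1) E2 ++ [k' + 1] := by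
          have h := csE (k' + 1) E2
          rwa [hfun] at h
        have hb : cs (k' + 1) E2 ≠ [] := cs_ne_nil k' E2 (hdiag2 k' le_rfl)
        have hlen : (cs (k' + 1) E2).length ≤ n := by
          have := congrArg List.length hcsE
          simp only [List.length_append, List.length_singleton] at this
          omega
        rw [hcsE, fAM_concat _ _ hb, ih k' E2 hsupp2 hdiag2 hlen]
        have hmind : mindex ⟨k' + 1, E2⟩ ≤ k' := by
          apply Nat.sInf_le
          show E2 k' (k' + 1 - 1) ≠ 0
          simpa using (hdiag2 k' le_rfl).ne'
        rw [fStep]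
        rw [if_neg (by omega), if_pos rfl]
        exact fmat_ext rfl hfun
    · set E3 : ℕ → ℕ → ℕ := fun i j => e i j - if i = L ∧ j = k then 1 else 0 with hE3
      have hm2 : L = k → 2 ≤ e L k := by
        intro h
        have h1 : e L k ≠ 1 := fun h1 => hc ⟨h, h1⟩
        omega
      have hfun : (fun i j => E3 i j + if i = L ∧ j = k then 1 else 0) = e := by
        funext i j
        by_cases h : i = L ∧ j = k
        · obtain ⟨rfl, rfl⟩ := h
          simp only [hE3, and_self, if_pos]
          have := hLmem
          omega
        · simp [hE3, h]
      have hsupp3 : ∀ i j, (k + 1 ≤ i ∨ k + 1 ≤ j ∨ j < i) → E3 i j = 0 := by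
        intro i j h
        simp only [hE3]
        rw [hs i j h]
        exact Nat.zero_sub _
      have hdiag3 : ∀ i, i ≤ k → 0 < E3 i i := by
        intro i hi
        simp only [hE3]
        by_cases h : i = L ∧ i = k
        · obtain ⟨rfl, h2⟩ := h
          have h3 := hm2 h2
          rw [← h2] at h3
          rw [if_pos ⟨rfl, h2⟩]
          omega
        · rw [if_neg h]
          have := hd i hi
          omega
      have hcsF : cs (k + 1) e = cs (k + 1) E3 ++ [L] := by
        have h := csF k E3 L hLk (by
          intro i hi
          simp only [hE3]
          rw [hlow i hi, if_neg (by omega)])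
        rwa [hfun] at h
      have hb : cs (k + 1) E3 ≠ [] := cs_ne_nil k E3 (hdiag3 k le_rfl)
      have hlen : (cs (k + 1) E3).length ≤ n := by
        have := congrArg List.length hcsF
        simp only [List.length_append, List.length_singleton] at this
        omega
      rw [hcsF, fAM_concat _ _ hb, ih k E3 hsupp3 hdiag3 hlen]
      have hmind : L ≤ mindex ⟨k + 1, E3⟩ := by
        apply le_csInf
        · by_cases hLk' : L = k
          · refine ⟨L, ?_⟩
            show E3 L (k + 1 - 1) ≠ 0
            have h3 := hm2 hLk'
            have h4 : E3 L (k + 1 - 1) = e L k - 1 := by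
              simp [hE3]
            rw [h4]
            omega
          · refine ⟨k, ?_⟩
            show E3 k (k + 1 - 1) ≠ 0
            simp only [hE3, Nat.add_sub_cancel]
            rw [if_neg (by tauto)]
            exact (hd k le_rfl).ne'
        · intro i hi
          by_contra hlt
          push_neg at hlt
          apply hi
          show E3 i (k + 1 - 1) = 0
          simp only [hE3, Nat.add_sub_cancel]
          rw [hlow i hlt, if_neg (by omega)]
      rw [fStep]
      rw [if_pos hmind]
      exact fmat_ext rfl hfun

lemma sm_dropLast {b : List ℕ} {x : ℕ} (h : SelfModified (b ++ [x])) :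
    SelfModified b := by
  obtain ⟨⟨h1, h2⟩, h3⟩ := h
  rcases eq_or_ne b [] with rfl | hb
  · exact ⟨⟨rfl, by intro k hk; simp at hk⟩, by intro k hk; simp at hk⟩
  · have hb0 : 0 < b.length := List.length_pos_iff.mpr hb
    refine ⟨⟨?_, ?_⟩, ?_⟩
    · rw [← List.getD_append b [x] 0 0 hb0]
      exact h1
    · intro k hk hk0
      have h4 := h2 k (by simp only [List.length_append, List.length_singleton]; omega) hk0
      rwa [List.getD_append _ _ _ _ hk, List.take_append_of_le_length (le_of_lt hk)] at h4
    · intro k hk hk0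
      have h4 := h3 k (by simp only [List.length_append, List.length_singleton]; omega) hk0
      rwa [List.getD_append _ _ _ _ hk, List.getD_append _ _ _ _ (by omega : k - 1 < b.length),
        List.take_append_of_le_length (le_of_lt hk)] at h4

/-- Main lemma B: self-modified ascent sequences have canonical form. -/
lemma lemB : ∀ a : List ℕ, SelfModified a → a ≠ [] →
    ∃ k e, a = cs (k + 1) e ∧
      (∀ i j, (k + 1 ≤ i ∨ k + 1 ≤ j ∨ j < i) → e i j = 0) ∧
      (∀ i, i ≤ k → 0 < e i i) ∧
      ascents a = k ∧
      ∃ L, a.getLast? = some L ∧ e L k ≠ 0 ∧ ∀ i, e i k ≠ 0 → L ≤ i := by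
  intro a
  induction a using List.reverseRecOn with
  | nil => intro _ h; exact absurd rfl h
  | append_singleton b x ih =>
    intro ha _
    rcases eq_or_ne b [] with rfl | hb
    · -- base case: a = [x] with x = 0
      have hx0 : x = 0 := ha.1.1
      subst hx0
      refine ⟨0, fun i j => if i = 0 ∧ j = 0 then 1 else 0, ?_, ?_, ?_, ?_, ?_⟩
      · unfold cs
        simp [List.range_succ]
      · intro i j h
        show (if i = 0 ∧ j = 0 then 1 else 0) = 0
        rw [if_neg (by omega)]
      · intro i hi
        simp [show i = 0 by omega]
      · simp [ascents_singleton]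
      · exact ⟨0, rfl, by simp, fun i _ => Nat.zero_le i⟩
    · have hb0 : 0 < b.length := List.length_pos_iff.mpr hb
      obtain ⟨k, e, hbcs, hsupp, hdiag, hasc, L, hlast, hLne, hLlb⟩ :=
        ih (sm_dropLast ha) hb
      have hLk : L ≤ k := by
        by_contra h
        exact hLne (hsupp L k (by omega))
      -- the last entry is x, the one before is L
      have hgetb : b.getD (b.length - 1) 0 = L := by
        rw [List.getD_eq_getElem?_getD, ← List.getLast?_eq_getElem?, hlast]
        rfl
      have hdisj : x ≤ L ∨ x = k + 1 := by
        have h4 := ha.2 b.length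
          (by simp only [List.length_append, List.length_singleton]; omega) hb0
        rw [List.getD_append_right _ _ _ _ le_rfl, Nat.sub_self,
          List.getD_append _ _ _ _ (by omega : b.length - 1 < b.length),
          List.take_append_of_le_length le_rfl, List.take_length, hgetb, hasc] at h4
        simpa using h4
      have hlow : ∀ i, i < x → x ≤ L → e i k = 0 := by
        intro i hi hxL
        by_contra hne
        have := hLlb i hne
        omega
      rcases hdisj with hxL | hxk
      · -- AM1-type extension
        refine ⟨k, fun i j => e i j + if i = x ∧ j = k then 1 else 0, ?_, ?_, ?_, ?_, ?_⟩
        · rw [csF k e x (by omega) (fun i hi => hlow i hi hxL), ← hbcs]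
        · intro i j h
          show (e i j + if i = x ∧ j = k then 1 else 0) = 0
          rw [hsupp i j h, if_neg (by omega)]
        · intro i hi
          show 0 < e i i + if i = x ∧ i = k then 1 else 0
          exact Nat.lt_of_lt_of_le (hdiag i hi) (Nat.le_add_right _ _)
        · rw [ascents_concat b L x hlast, hasc, if_neg (by omega)]
          omega
        · refine ⟨x, List.getLast?_concat, by simp, ?_⟩
          intro i hi
          by_contra hlt
          push_neg at hlt
          apply hi
          show (e i k + if i = x ∧ k = k then 1 else 0) = 0
          rw [hlow i hlt hxL, if_neg (by omega)]
      · -- AM2-type extension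
        subst hxk
        refine ⟨k + 1, fun i j => if i = k + 1 ∨ j = k + 1 then
            (if i = k + 1 ∧ j = k + 1 then 1 else 0) else e i j, ?_, ?_, ?_, ?_, ?_⟩
        · rw [csE (k + 1) e, ← hbcs]
        · intro i j h
          show (if i = k + 1 ∨ j = k + 1 then (if i = k + 1 ∧ j = k + 1 then 1 else 0)
            else e i j) = 0
          by_cases hij : i = k + 1 ∨ j = k + 1
          · rw [if_pos hij, if_neg (by omega)]
          · push_neg at hij
            rw [if_neg (by tauto)]
            exact hsupp i j (by omega)
        · intro i hi
          show 0 < if i = k + 1 ∨ i = k + 1 then (if i = k + 1 ∧ i = k + 1 then 1 else 0)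
            else e i i
          by_cases hik : i = k + 1
          · simp [hik]
          · rw [if_neg (by tauto)]
            exact hdiag i (by omega)
        · rw [ascents_concat b L (k + 1) hlast, hasc, if_pos (by omega)]
        · refine ⟨k + 1, List.getLast?_concat, by simp, ?_⟩
          intro i hi
          by_contra hlt
          push_neg at hlt
          apply hi
          show (if i = k + 1 ∨ k + 1 = k + 1 then (if i = k + 1 ∧ k + 1 = k + 1 then 1 else 0)
            else e i (k + 1)) = 0
          rw [if_pos (Or.inr rfl), if_neg (by omega)]

end SMAux

theorem selfModified_canonical_form (a : List ℕ) (M : FMat)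
    (ha : SelfModified a) (hne : a ≠ []) (hM : fAM a = M) :
    a = canonSeq M ∧ fAM (dualCanonSeq M) = reflect M := by
  obtain ⟨k, e, hacs, hsupp, hdiag, -⟩ := lemB a ha hne
  have hA : fAM (cs (k + 1) e) = ⟨k + 1, e⟩ :=
    lemA (cs (k + 1) e).length k e hsupp hdiag le_rfl
  subst hM
  rw [hacs, hA]
  constructor
  · rfl
  · have hdual : dualCanonSeq ⟨k + 1, e⟩ =
        cs (k + 1) (fun i j => if i < k + 1 ∧ j < k + 1 then
          e (k + 1 - 1 - j) (k + 1 - 1 - i) else 0) := by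
      show (List.range (k + 1)).flatMap _ = _
      unfold cs
      apply flatMap_congr'
      intro j hj
      apply flatMap_congr'
      intro i hi
      simp only [List.mem_range] at hj
      simp only [List.mem_reverse, List.mem_range] at hi
      show List.replicate (e (k + 1 - 1 - j) (k + 1 - 1 - i)) i =
        List.replicate (if i < k + 1 ∧ j < k + 1 then
          e (k + 1 - 1 - j) (k + 1 - 1 - i) else 0) i
      rw [if_pos (⟨by omega, by omega⟩ : i < k + 1 ∧ j < k + 1)]
    rw [hdual]
    have hsupp' : ∀ i j, (k + 1 ≤ i ∨ k + 1 ≤ j ∨ j < i) →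
        (fun i j => if i < k + 1 ∧ j < k + 1 then
          e (k + 1 - 1 - j) (k + 1 - 1 - i) else 0) i j = 0 := by
      intro i j h
      show (if i < k + 1 ∧ j < k + 1 then e (k + 1 - 1 - j) (k + 1 - 1 - i) else 0) = 0
      by_cases hij : i < k + 1 ∧ j < k + 1
      · rw [if_pos hij]
        exact hsupp _ _ (Or.inr (Or.inr (by omega)))
      · rw [if_neg hij]
    have hdiag' : ∀ i, i ≤ k →
        0 < (fun i j => if i < k + 1 ∧ j < k + 1 then
          e (k + 1 - 1 - j) (k + 1 - 1 - i) else 0) i i := by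
      intro i hi
      show 0 < if i < k + 1 ∧ i < k + 1 then e (k + 1 - 1 - i) (k + 1 - 1 - i) else 0
      rw [if_pos ⟨by omega, by omega⟩]
      exact hdiag _ (by omega)
    rw [lemA _ k _ hsupp' hdiag' le_rfl]
    rfl
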